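/- arXiv:2012.12129 — 6 statements merged into one kernel-verified Lean document; each statement's English description precedes it below -/
import Mathlib

section
/- The function n ↦ c_n := (1/(2n)) * ((1/3) * tan(π/n) + cot(π/n)), defined for real n ∈ [3, ∞), is convex and strictly decreasing, and tends to 1/(2π) as n → ∞. -/
open Real Set Filter Topology

noncomputable def cFun (n : ℝ) : ℝ :=
  1 / (2 * n) * ((1 / 3) * Real.tan (π / n) + Real.cot (π / n))

/- Auxiliary functions:  with `t = 2π/n`, `cFun n = (2 + cos t)/(3 n sin t)`,
and the derivative of `cFun` is `-qAux (2π/n) / (12 π²)`. -/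

noncomputable def pAux (t : ℝ) : ℝ :=
  (2 + Real.cos t) * Real.sin t - t * (1 + 2 * Real.cos t)

noncomputable def qAux (t : ℝ) : ℝ := t ^ 2 * pAux t / Real.sin t ^ 2

noncomputable def cAux (n : ℝ) : ℝ :=
  (2 + Real.cos (2 * π / n)) / (3 * n * Real.sin (2 * π / n))

lemma pAux_hasDeriv (t : ℝ) :
    HasDerivAt pAux (2 * Real.sin t * (t - Real.sin t)) t := by
  have h1 : HasDerivAt (fun y : ℝ => (2 + Real.cos y) * Real.sin y)
      (-Real.sin t * Real.sin t + (2 + Real.cos t) * Real.cos t) t :=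
    ((Real.hasDerivAt_cos t).const_add 2).mul (Real.hasDerivAt_sin t)
  have h2 : HasDerivAt (fun y : ℝ => y * (1 + 2 * Real.cos y))
      (1 * (1 + 2 * Real.cos t) + t * (2 * -Real.sin t)) t :=
    (hasDerivAt_id' t).mul (((Real.hasDerivAt_cos t).const_mul 2).const_add 1)
  have h := h1.sub h2
  refine h.congr_deriv ?_
  linear_combination Real.sin_sq_add_cos_sq t

lemma pAux_pos {t : ℝ} (ht0 : 0 < t) (ht1 : t ≤ 2 * π / 3) : 0 < pAux t := by
  have hpi := Real.pi_pos
  have hmono : StrictMonoOn pAux (Icc 0 (2 * π / 3)) := by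
    apply strictMonoOn_of_deriv_pos (convex_Icc _ _)
    · unfold pAux; fun_prop
    · intro x hx
      rw [interior_Icc] at hx
      rw [(pAux_hasDeriv x).deriv]
      have hs : 0 < Real.sin x :=
        Real.sin_pos_of_pos_of_lt_pi hx.1 (by linarith [hx.2])
      have hlt : Real.sin x < x := Real.sin_lt hx.1
      have : (0:ℝ) < x - Real.sin x := by linarith
      exact mul_pos (mul_pos two_pos hs) this
  have h0 : pAux 0 = 0 := by simp [pAux]
  have := hmono (left_mem_Icc.2 (by linarith)) ⟨ht0.le, ht1⟩ ht0
  linarith [this, h0.symm ▸ this]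

lemma sin_sub_mul_cos_nonneg {t : ℝ} (ht0 : 0 ≤ t) (ht1 : t ≤ π) :
    0 ≤ Real.sin t - t * Real.cos t := by
  have hmono : MonotoneOn (fun y : ℝ => Real.sin y - y * Real.cos y) (Icc 0 π) := by
    apply monotoneOn_of_deriv_nonneg (convex_Icc _ _)
    · fun_prop
    · apply Differentiable.differentiableOn; fun_prop
    · intro x hx
      rw [interior_Icc] at hx
      have hd : HasDerivAt (fun y : ℝ => Real.sin y - y * Real.cos y)
          (Real.cos x - (1 * Real.cos x + x * -Real.sin x)) x :=
        (Real.hasDerivAt_sin x).sub ((hasDerivAt_id' x).mul (Real.hasDerivAt_cos x))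
      rw [hd.deriv]
      have hs : 0 ≤ Real.sin x := Real.sin_nonneg_of_nonneg_of_le_pi hx.1.le hx.2.le
      nlinarith [hx.1]
  have h := hmono (left_mem_Icc.2 Real.pi_pos.le) ⟨ht0, ht1⟩ ht0
  simpa using h

lemma qAux_hasDeriv {t : ℝ} (hs : Real.sin t ≠ 0) :
    HasDerivAt qAux
      ((2 * t * pAux t * (Real.sin t - t * Real.cos t)
        + 2 * t ^ 2 * Real.sin t ^ 2 * (t - Real.sin t)) / Real.sin t ^ 3) t := by
  have hA : HasDerivAt (fun y : ℝ => y ^ 2 * pAux y)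
      ((2 : ℕ) * t ^ 1 * pAux t + t ^ 2 * (2 * Real.sin t * (t - Real.sin t))) t :=
    (hasDerivAt_pow 2 t).mul (pAux_hasDeriv t)
  have hB : HasDerivAt (fun y : ℝ => Real.sin y ^ 2)
      ((2 : ℕ) * Real.sin t ^ 1 * Real.cos t) t := (Real.hasDerivAt_sin t).pow 2
  have h := hA.div hB (pow_ne_zero 2 hs)
  refine h.congr_deriv ?_
  field_simp
  ring

lemma qAux_mono : MonotoneOn qAux (Ioo 0 (2 * π / 3)) := by
  have hpi := Real.pi_pos
  have key : ∀ x ∈ Ioo (0:ℝ) (2 * π / 3), Real.sin x ≠ 0 := by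
    intro x hx
    exact (Real.sin_pos_of_pos_of_lt_pi hx.1 (by linarith [hx.2])).ne'
  apply monotoneOn_of_deriv_nonneg (convex_Ioo _ _)
  · intro x hx
    exact ((qAux_hasDeriv (key x hx)).continuousAt).continuousWithinAt
  · intro x hx
    rw [interior_Ioo] at hx
    exact ((qAux_hasDeriv (key x hx)).differentiableAt).differentiableWithinAt
  · intro x hx
    rw [interior_Ioo] at hx
    rw [(qAux_hasDeriv (key x hx)).deriv]
    have hsin : 0 < Real.sin x :=
      Real.sin_pos_of_pos_of_lt_pi hx.1 (by linarith [hx.2])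
    have hp : 0 < pAux x := pAux_pos hx.1 hx.2.le
    have h1 : 0 ≤ Real.sin x - x * Real.cos x :=
      sin_sub_mul_cos_nonneg hx.1.le (by linarith [hx.2])
    have h2 : Real.sin x < x := Real.sin_lt hx.1
    have hx0 := hx.1
    apply div_nonneg
    · have hA : 0 ≤ 2 * x * pAux x * (Real.sin x - x * Real.cos x) :=
        mul_nonneg (mul_nonneg (by linarith) hp.le) h1
      have hB : 0 ≤ 2 * x ^ 2 * Real.sin x ^ 2 * (x - Real.sin x) :=
        mul_nonneg (mul_nonneg (by positivity) (sq_nonneg _)) (by linarith)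
      linarith
    · positivity

lemma hasDerivAt_s {n : ℝ} (hn : n ≠ 0) :
    HasDerivAt (fun y : ℝ => 2 * π / y) (-(2 * π) / n ^ 2) n := by
  have h := (hasDerivAt_inv hn).const_mul (2 * π)
  simp only [div_eq_mul_inv]
  refine h.congr_deriv ?_
  field_simp

lemma cAux_hasDeriv {n : ℝ} (hn : 3 < n) :
    HasDerivAt cAux (-(qAux (2 * π / n)) / (12 * π ^ 2)) n := by
  have hpi := Real.pi_pos
  have hn0 : (0:ℝ) < n := by linarith
  have hsarg : 0 < 2 * π / n := by positivity
  have hsarg2 : 2 * π / n < π := by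
    rw [div_lt_iff₀ hn0]; nlinarith
  have hsin : Real.sin (2 * π / n) ≠ 0 :=
    (Real.sin_pos_of_pos_of_lt_pi hsarg hsarg2).ne'
  have hden : 3 * n * Real.sin (2 * π / n) ≠ 0 := by
    have := (Real.sin_pos_of_pos_of_lt_pi hsarg hsarg2)
    positivity
  have hs := hasDerivAt_s hn0.ne'
  have hN : HasDerivAt (fun y : ℝ => 2 + Real.cos (2 * π / y))
      (-Real.sin (2 * π / n) * (-(2 * π) / n ^ 2)) n := (hs.cos).const_add 2
  have hD : HasDerivAt (fun y : ℝ => 3 * y * Real.sin (2 * π / y))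
      (3 * 1 * Real.sin (2 * π / n) + 3 * n * (Real.cos (2 * π / n) * (-(2 * π) / n ^ 2))) n :=
    ((hasDerivAt_id' n).const_mul 3).mul hs.sin
  have h := hN.div hD hden
  refine h.congr_deriv ?_
  simp only [qAux, pAux]
  field_simp
  linear_combination (24 * π) *
    Real.sin_sq_add_cos_sq (2 * π / n)

lemma targ_mem {n : ℝ} (hn : 3 < n) : 2 * π / n ∈ Ioo (0:ℝ) (2 * π / 3) := by
  have hpi := Real.pi_pos
  have hn0 : (0:ℝ) < n := by linarith
  exact ⟨by positivity, div_lt_div_of_pos_left (by positivity) three_pos hn⟩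

lemma cFun_eq : EqOn cFun cAux (Ici 3) := by
  intro n hn
  have hpi := Real.pi_pos
  have hn3 : (3:ℝ) ≤ n := hn
  have hn0 : (0:ℝ) < n := by linarith
  have hu1 : 0 < π / n := by positivity
  have hu2 : π / n ≤ π / 3 := div_le_div_of_nonneg_left hpi.le three_pos hn3
  have hcos : 0 < Real.cos (π / n) := by
    apply Real.cos_pos_of_mem_Ioo
    constructor <;> [linarith; linarith [Real.pi_gt_three]]
  have hsin : 0 < Real.sin (π / n) :=
    Real.sin_pos_of_pos_of_lt_pi hu1 (by linarith)
  unfold cFun cAux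
  rw [Real.tan_eq_sin_div_cos, Real.cot_eq_cos_div_sin,
    show 2 * π / n = 2 * (π / n) by ring, Real.sin_two_mul, Real.cos_two_mul]
  field_simp
  linear_combination Real.sin_sq_add_cos_sq (π / n)

lemma cAux_cont : ContinuousOn cAux (Ici 3) := by
  have hpi := Real.pi_pos
  have hne : ∀ n ∈ Ici (3:ℝ), n ≠ 0 := fun n hn => by
    have : (3:ℝ) ≤ n := hn; positivity
  have hs : ContinuousOn (fun n : ℝ => 2 * π / n) (Ici 3) :=
    continuousOn_const.div continuousOn_id hne
  apply ContinuousOn.div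
  · exact continuousOn_const.add (Real.continuous_cos.comp_continuousOn hs)
  · exact (continuousOn_const.mul continuousOn_id).mul
      (Real.continuous_sin.comp_continuousOn hs)
  · intro n hn
    have hn3 : (3:ℝ) ≤ n := hn
    have hn0 : (0:ℝ) < n := by linarith
    have h1 : 0 < 2 * π / n := by positivity
    have h2 : 2 * π / n < π := by rw [div_lt_iff₀ hn0]; nlinarith
    have := Real.sin_pos_of_pos_of_lt_pi h1 h2
    positivity

lemma cAux_convex : ConvexOn ℝ (Ici 3) cAux := by
  have hpi := Real.pi_pos
  apply MonotoneOn.convexOn_of_deriv (convex_Ici 3) cAux_cont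
  · rw [interior_Ici]
    exact fun n hn => ((cAux_hasDeriv hn).differentiableAt).differentiableWithinAt
  · rw [interior_Ici]
    intro a ha b hb hab
    rw [(cAux_hasDeriv ha).deriv, (cAux_hasDeriv hb).deriv]
    have ha' : (3:ℝ) < a := ha
    have hb' : (3:ℝ) < b := hb
    have hq : qAux (2 * π / b) ≤ qAux (2 * π / a) := by
      apply qAux_mono (targ_mem hb') (targ_mem ha')
      gcongr
    have h12 : (0:ℝ) < 12 * π ^ 2 := by positivity
    gcongr

lemma cAux_anti : StrictAntiOn cAux (Ici 3) := by
  have hpi := Real.pi_pos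
  apply strictAntiOn_of_deriv_neg (convex_Ici 3) cAux_cont
  rw [interior_Ici]
  intro n hn
  rw [(cAux_hasDeriv hn).deriv]
  have ht := targ_mem hn
  have hsin : 0 < Real.sin (2 * π / n) :=
    Real.sin_pos_of_pos_of_lt_pi ht.1 (by linarith [ht.2])
  have hq : 0 < qAux (2 * π / n) := by
    have hp : 0 < pAux (2 * π / n) := pAux_pos ht.1 ht.2.le
    have := ht.1
    unfold qAux
    positivity
  have h12 : (0:ℝ) < 12 * π ^ 2 := by positivity
  exact div_neg_of_neg_of_pos (by linarith) h12

lemma tendsto_s : Tendsto (fun n : ℝ => 2 * π / n) atTop (𝓝[≠] (0:ℝ)) := by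
  rw [tendsto_nhdsWithin_iff]
  constructor
  · exact Tendsto.div_atTop tendsto_const_nhds tendsto_id
  · filter_upwards [eventually_gt_atTop (0:ℝ)] with n hn
    have hpi := Real.pi_pos
    simp only [mem_compl_iff, mem_singleton_iff]
    positivity

lemma tendsto_sin_div : Tendsto (fun y : ℝ => Real.sin y / y) (𝓝[≠] (0:ℝ)) (𝓝 1) := by
  have h := hasDerivAt_iff_tendsto_slope.mp (Real.hasDerivAt_sin 0)
  rw [Real.cos_zero] at h
  refine h.congr fun y => ?_
  rw [slope_def_field]
  simp [Real.sin_zero]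

lemma cAux_tendsto : Tendsto cAux atTop (𝓝 (1 / (2 * π))) := by
  have hpi := Real.pi_pos
  have h1 : Tendsto (fun n : ℝ => 2 + Real.cos (2 * π / n)) atTop (𝓝 3) := by
    have := ((Real.continuous_cos.tendsto 0).comp
      (tendsto_s.mono_right nhdsWithin_le_nhds)).const_add 2
    norm_num at this
    exact this
  have h2 : Tendsto (fun n : ℝ => 6 * π * (Real.sin (2 * π / n) / (2 * π / n)))
      atTop (𝓝 (6 * π * 1)) := (tendsto_sin_div.comp tendsto_s).const_mul _
  have h3 := h1.div h2 (by positivity)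
  have heq : ∀ᶠ n : ℝ in atTop,
      (2 + Real.cos (2 * π / n)) / (6 * π * (Real.sin (2 * π / n) / (2 * π / n))) = cAux n := by
    filter_upwards [eventually_ge_atTop (3:ℝ)] with n hn
    have hn0 : (0:ℝ) < n := by linarith
    have h1 : 0 < 2 * π / n := by positivity
    have h2 : 2 * π / n < π := by rw [div_lt_iff₀ hn0]; nlinarith
    have hsin := Real.sin_pos_of_pos_of_lt_pi h1 h2
    unfold cAux
    rw [div_eq_div_iff (by positivity) (by positivity)]
    field_simp
    ring
  have := h3.congr' heq
  convert this using 2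
  ring

/-- On `[3, ∞)` the function `n ↦ c_n` is convex and strictly decreasing, and it
tends to `1/(2π)` as `n → ∞`. -/
theorem stmt1 :
    ConvexOn ℝ (Set.Ici (3 : ℝ)) cFun ∧ StrictAntiOn cFun (Set.Ici (3 : ℝ)) ∧
      Tendsto cFun atTop (nhds (1 / (2 * π))) := by
  refine ⟨?_, ?_, ?_⟩
  · refine ⟨convex_Ici 3, fun x hx y hy a b ha hb hab => ?_⟩
    have hmem : a • x + b • y ∈ Ici (3:ℝ) := (convex_Ici 3) hx hy ha hb hab
    rw [cFun_eq hx, cFun_eq hy, cFun_eq hmem]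
    exact cAux_convex.2 hx hy ha hb hab
  · intro x hx y hy hxy
    rw [cFun_eq hx, cFun_eq hy]
    exact cAux_anti hx hy hxy
  · refine cAux_tendsto.congr' ?_
    filter_upwards [eventually_ge_atTop (3:ℝ)] with n hn
    exact (cFun_eq hn).symm
end

section
/- The function α ↦ (α·2^{1−α} − 2 + α)/(1 − α) is increasing on (0, 1), and its limit as α → 1⁻ equals ln 2 − 2. -/
open Real Set Filter

private lemma stmt7_hasDerivAt (x : ℝ) :
    HasDerivAt (fun α : ℝ => α * (2 : ℝ) ^ (1 - α) - 2 + α)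
      (1 * (2 : ℝ) ^ (1 - x) + x * ((2 : ℝ) ^ (1 - x) * Real.log 2 * (0 - 1)) + 1) x := by
  have h1 : HasDerivAt (fun α : ℝ => (1 : ℝ) - α) (0 - 1) x :=
    (hasDerivAt_const x (1 : ℝ)).sub (hasDerivAt_id x)
  have h2 : HasDerivAt (fun α : ℝ => (2 : ℝ) ^ (1 - α))
      ((2 : ℝ) ^ (1 - x) * Real.log 2 * (0 - 1)) x :=
    (Real.hasStrictDerivAt_const_rpow (by norm_num) (1 - x)).hasDerivAt.comp x h1
  exact (((hasDerivAt_id x).mul h2).sub_const 2).add (hasDerivAt_id x)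

private lemma stmt7_key {x : ℝ} (hx : x ∈ Set.Ioo (0:ℝ) 1) :
    0 < Real.exp (Real.log 2 * (1 - x)) * (1 - x * (1 - x) * Real.log 2) - 1 := by
  obtain ⟨hx0, hx1⟩ := hx
  set c := Real.log 2 with hc
  have hc0 : 0 < c := Real.log_pos (by norm_num)
  have hc1 : c < 1 := by
    have := Real.log_two_lt_d9; norm_num at this ⊢; linarith
  have hE : c * (1 - x) + 1 < Real.exp (c * (1 - x)) :=
    Real.add_one_lt_exp (ne_of_gt (mul_pos hc0 (by linarith)))
  have h2 : 0 < 1 - c * x * (1 - x) := by nlinarith [sq_nonneg (1 - 2 * x)]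
  have h3 : 0 < c * (1 - x) ^ 2 * (1 - c * x) := by
    have h4 : 0 < 1 - c * x := by nlinarith
    have h5 : 0 < (1 - x) ^ 2 := pow_pos (by linarith) 2
    exact mul_pos (mul_pos hc0 h5) h4
  nlinarith [mul_pos (sub_pos.2 hE) h2]

/-- The function `α ↦ (α·2^{1−α} − 2 + α)/(1 − α)` is increasing on `(0,1)` and its
limit as `α → 1⁻` equals `ln 2 − 2`. -/
theorem stmt7 :
    StrictMonoOn (fun α : ℝ => (α * (2 : ℝ) ^ (1 - α) - 2 + α) / (1 - α))
      (Set.Ioo 0 1) ∧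
    Tendsto (fun α : ℝ => (α * (2 : ℝ) ^ (1 - α) - 2 + α) / (1 - α))
      (nhdsWithin 1 (Set.Iio 1)) (nhds (Real.log 2 - 2)) := by
  set u : ℝ → ℝ := fun α => α * (2 : ℝ) ^ (1 - α) - 2 + α with hu_def
  have hderiv : ∀ x : ℝ, x ≠ 1 →
      HasDerivAt (fun α : ℝ => u α / (1 - α))
        (((1 * (2 : ℝ) ^ (1 - x) + x * ((2 : ℝ) ^ (1 - x) * Real.log 2 * (0 - 1)) + 1) * (1 - x)
          - u x * (0 - 1)) / (1 - x) ^ 2) x := by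
    intro x hx
    exact (stmt7_hasDerivAt x).div ((hasDerivAt_const x (1:ℝ)).sub (hasDerivAt_id x))
      (sub_ne_zero.2 (fun h => hx h.symm))
  constructor
  · apply strictMonoOn_of_deriv_pos (convex_Ioo 0 1)
    · intro x hx
      exact (hderiv x (ne_of_lt hx.2)).continuousAt.continuousWithinAt
    · intro x hx
      rw [interior_Ioo] at hx
      rw [(hderiv x (ne_of_lt hx.2)).deriv]
      apply div_pos _ (by nlinarith [hx.2] : (0:ℝ) < (1 - x) ^ 2)
      have h2 : (2 : ℝ) ^ (1 - x) = Real.exp (Real.log 2 * (1 - x)) :=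
        Real.rpow_def_of_pos (by norm_num) _
      have hkey := stmt7_key hx
      simp only [hu_def, h2]
      nlinarith [hkey]
  · have hu1 : u 1 = 0 := by simp [hu_def]; norm_num
    have hslope : Tendsto (slope u 1) (nhdsWithin 1 {(1:ℝ)}ᶜ)
        (nhds (1 * (2 : ℝ) ^ (1 - (1:ℝ)) + 1 * ((2 : ℝ) ^ (1 - (1:ℝ)) * Real.log 2 * (0 - 1)) + 1)) :=
      hasDerivAt_iff_tendsto_slope.1 (stmt7_hasDerivAt 1)
    have hmono : Tendsto (slope u 1) (nhdsWithin 1 (Set.Iio 1))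
        (nhds (1 * (2 : ℝ) ^ (1 - (1:ℝ)) + 1 * ((2 : ℝ) ^ (1 - (1:ℝ)) * Real.log 2 * (0 - 1)) + 1)) :=
      hslope.mono_left (nhdsWithin_mono 1 (fun y hy => ne_of_lt hy))
    have hneg := hmono.neg
    have heq : (fun α => -slope u 1 α) =ᶠ[nhdsWithin 1 (Set.Iio 1)]
        (fun α : ℝ => (α * (2 : ℝ) ^ (1 - α) - 2 + α) / (1 - α)) := by
      filter_upwards [self_mem_nhdsWithin] with α (hα : α < 1)
      rw [slope_def_field, hu1]
      have h1 : α - 1 ≠ 0 := sub_ne_zero.2 (ne_of_lt hα)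
      have h2 : (1:ℝ) - α ≠ 0 := sub_ne_zero.2 (fun h => (ne_of_lt hα) h.symm)
      field_simp [hu_def]
      ring
    have hval : -(1 * (2:ℝ) ^ (1 - (1:ℝ)) + 1 * ((2:ℝ) ^ (1 - (1:ℝ)) * Real.log 2 * (0 - 1)) + 1)
        = Real.log 2 - 2 := by norm_num; ring
    rw [← hval]
    exact Filter.Tendsto.congr' heq hneg
end

section
/- For the case α = 1, define h₁(m, n) = c_n m² − c₆ m − c₆ m ln m − κ (n − 6) for m > 0, n ≥ 3, with c₆ = 5/(18√3), κ = 2π/243 − 5√3/324, and c_n = (1/(2n))((1/3)tan(π/n) + cot(π/n)). Then for each fixed n ≥ 3, the map m ↦ ∂_m h₁(m, n) = 2 c_n m − 2 c₆ − c₆ ln m is strictly convex with unique critical point m = c₆/(2 c_n), and ∂_m h₁(c₆/(2c_n), n) = −c₆ − c₆ ln(c₆/(2c_n)) < 0; consequently m ↦ h₁(m, n) has exactly two critical points, the larger being a local minimum. -/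
open Real Set Filter

noncomputable def c6 : ℝ := 5 / (18 * Real.sqrt 3)

noncomputable def kappa : ℝ := 2 * π / 243 - 5 * Real.sqrt 3 / 324

noncomputable def h1 (m n : ℝ) : ℝ :=
  cFun n * m ^ 2 - c6 * m - c6 * m * Real.log m - kappa * (n - 6)

/-- The partial derivative `∂_m h₁(m,n)`. -/
noncomputable def g1 (n m : ℝ) : ℝ := 2 * cFun n * m - 2 * c6 - c6 * Real.log m

section Aux

lemma tan_lower_aux {x : ℝ} (hx0 : 0 ≤ x) (hx2 : x < π / 2) : x + x ^ 3 / 3 ≤ Real.tan x := by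
  have hcos : ∀ y ∈ Ico (0:ℝ) (π/2), 0 < Real.cos y := fun y hy =>
    Real.cos_pos_of_mem_Ioo ⟨by linarith [Real.pi_pos, hy.1], hy.2⟩
  have hF : ∀ y ∈ Ico (0:ℝ) (π/2),
      HasDerivAt (fun y : ℝ => Real.tan y - (y + y ^ 3 / 3))
        (1 / Real.cos y ^ 2 - (1 + (3:ℕ) * y ^ 2 / 3)) y := by
    intro y hy
    exact (Real.hasDerivAt_tan (hcos y hy).ne').sub
      ((hasDerivAt_id y).add ((hasDerivAt_pow 3 y).div_const 3))
  have key : MonotoneOn (fun y : ℝ => Real.tan y - (y + y ^ 3 / 3)) (Ico 0 (π/2)) := by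
    apply monotoneOn_of_deriv_nonneg (convex_Ico 0 (π/2))
    · exact fun y hy => (hF y hy).continuousAt.continuousWithinAt
    · rw [interior_Ico]
      exact fun y hy => (hF y (Ioo_subset_Ico_self hy)).differentiableAt.differentiableWithinAt
    · rw [interior_Ico]
      intro y hy
      rw [(hF y (Ioo_subset_Ico_self hy)).deriv]
      have hcne := (hcos y (Ioo_subset_Ico_self hy)).ne'
      have h1 : 1 / Real.cos y ^ 2 = 1 + Real.tan y ^ 2 := by
        rw [← Real.inv_one_add_tan_sq hcne, one_div, inv_inv]
      rw [h1]
      have := Real.le_tan hy.1.le hy.2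
      push_cast
      nlinarith [hy.1]
  have h0 : (0:ℝ) ∈ Ico (0:ℝ) (π/2) := ⟨le_refl _, by positivity⟩
  have := key h0 ⟨hx0, hx2⟩ hx0
  simp only [Real.tan_zero] at this
  linarith

lemma tan_upper_aux {x : ℝ} (hx0 : 0 ≤ x) (hx3 : x ≤ π / 3) :
    Real.tan x ≤ 3 * Real.sqrt 3 / π * x := by
  have hpi := Real.pi_pos
  have h32 : π / 3 < π / 2 := by linarith
  have hcos : ∀ y ∈ Icc (0:ℝ) (π/3), 0 < Real.cos y := fun y hy =>
    Real.cos_pos_of_mem_Ioo ⟨by linarith [hy.1], by linarith [hy.2]⟩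
  have hconv : ConvexOn ℝ (Icc 0 (π/3)) Real.tan := by
    apply MonotoneOn.convexOn_of_deriv (convex_Icc 0 (π/3))
    · exact fun y hy => (Real.hasDerivAt_tan (hcos y hy).ne').continuousAt.continuousWithinAt
    · rw [interior_Icc]
      exact fun y hy =>
        (Real.hasDerivAt_tan (hcos y (Ioo_subset_Icc_self hy)).ne').differentiableAt.differentiableWithinAt
    · rw [interior_Icc]
      intro a ha b hb hab
      rw [Real.deriv_tan, Real.deriv_tan]
      have hca := hcos a (Ioo_subset_Icc_self ha)
      have hcb := hcos b (Ioo_subset_Icc_self hb)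
      have : Real.cos b ≤ Real.cos a :=
        Real.cos_le_cos_of_nonneg_of_le_pi ha.1.le (by linarith [hb.2]) hab
      have h2 : Real.cos b ^ 2 ≤ Real.cos a ^ 2 := by nlinarith
      exact one_div_le_one_div_of_le (by positivity) h2
  set t : ℝ := 3 * x / π with ht
  have ht0 : 0 ≤ t := by positivity
  have ht1 : t ≤ 1 := by rw [ht, div_le_one hpi]; linarith
  have hcomb := hconv.2 (⟨le_refl 0, by positivity⟩ : (0:ℝ) ∈ Icc 0 (π/3))
    (⟨by positivity, le_refl _⟩ : π/3 ∈ Icc 0 (π/3))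
    (by linarith : (0:ℝ) ≤ 1 - t) ht0 (by ring)
  simp only [smul_eq_mul, mul_zero, zero_add, Real.tan_zero] at hcomb
  have hx : t * (π / 3) = x := by rw [ht]; field_simp
  rw [hx, Real.tan_pi_div_three] at hcomb
  calc Real.tan x ≤ (1 - t) * 0 + t * Real.sqrt 3 := by linarith [hcomb]
    _ = 3 * Real.sqrt 3 / π * x := by rw [ht]; field_simp; ring

lemma sqrt3_lb : 1.7320508 < Real.sqrt 3 := by
  nlinarith [Real.sq_sqrt (by norm_num : (3:ℝ) ≥ 0), Real.sqrt_nonneg 3]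

lemma sqrt3_ub : Real.sqrt 3 < 1.7320509 := by
  nlinarith [Real.sq_sqrt (by norm_num : (3:ℝ) ≥ 0), Real.sqrt_nonneg 3]

lemma c6_pos : 0 < c6 := by
  unfold c6
  have := sqrt3_lb
  positivity

lemma cot_bound_aux {x : ℝ} (hx0 : 0 < x) (hx3 : x ≤ π / 3) :
    x * Real.cot x ≤ 3 / (3 + x ^ 2) := by
  have hpi := Real.pi_pos
  have hx2 : x < π / 2 := by linarith
  have hsin : 0 < Real.sin x := Real.sin_pos_of_pos_of_lt_pi hx0 (by linarith)
  have hcos : 0 < Real.cos x := Real.cos_pos_of_mem_Ioo ⟨by linarith, hx2⟩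
  have htl := tan_lower_aux hx0.le hx2
  have hden : 0 < x + x ^ 3 / 3 := by positivity
  have htp : 0 < Real.tan x := lt_of_lt_of_le hden htl
  have hcot : Real.cot x = 1 / Real.tan x := by
    rw [Real.cot_eq_cos_div_sin, Real.tan_eq_sin_div_cos, one_div, inv_div]
  rw [hcot]
  have h1 : x * (1 / Real.tan x) = x / Real.tan x := by ring
  rw [h1]
  have h2 : x / Real.tan x ≤ x / (x + x ^ 3 / 3) := by
    apply div_le_div_of_nonneg_left hx0.le hden htl
  have h3 : x / (x + x ^ 3 / 3) = 3 / (3 + x ^ 2) := by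
    rw [div_eq_div_iff hden.ne' (by positivity : (3:ℝ) + x^2 ≠ 0)]; ring
  linarith [h2, h3.symm.le, h3.le]

lemma cFun_pos {n : ℝ} (hn : 3 ≤ n) : 0 < cFun n := by
  have hpi := Real.pi_pos
  have hn0 : (0:ℝ) < n := by linarith
  have hx0 : 0 < π / n := by positivity
  have hx3 : π / n ≤ π / 3 := by
    apply div_le_div_of_nonneg_left hpi.le (by norm_num) hn
  have hx2 : π / n < π / 2 := by linarith
  have hsin : 0 < Real.sin (π / n) := Real.sin_pos_of_pos_of_lt_pi hx0 (by linarith)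
  have hcos : 0 < Real.cos (π / n) := Real.cos_pos_of_mem_Ioo ⟨by linarith, hx2⟩
  have htan : 0 < Real.tan (π / n) := Real.tan_pos_of_pos_of_lt_pi_div_two hx0 hx2
  have hcot : 0 < Real.cot (π / n) := by
    rw [Real.cot_eq_cos_div_sin]; positivity

  unfold cFun
  positivity

lemma two_cFun_lt {n : ℝ} (hn : 3 ≤ n) : 2 * cFun n < c6 * Real.exp 1 := by
  have hpi := Real.pi_pos
  have hπ1 : 3.141592 < π := Real.pi_gt_d6
  have hπ2 : π < 3.141593 := Real.pi_lt_d6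
  have hs1 := sqrt3_lb
  have hs2 := sqrt3_ub
  have he : 2.7182818 < Real.exp 1 := by linarith [Real.exp_one_gt_d9]
  have hn0 : (0:ℝ) < n := by linarith
  set x : ℝ := π / n with hxdef
  have hx0 : 0 < x := by positivity
  have hx3 : x ≤ π / 3 := div_le_div_of_nonneg_left hpi.le (by norm_num) hn
  have hx2 : x < π / 2 := by linarith
  have hnx : 1 / (2 * n) = x / (2 * π) := by
    rw [hxdef]; field_simp
  have hcf : 2 * cFun n = (1 / π) * (x * Real.tan x / 3 + x * Real.cot x) := by
    unfold cFun
    rw [← hxdef, hnx]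
    field_simp
  rw [hcf]
  have htub := tan_upper_aux hx0.le hx3
  have h1 : x * Real.tan x / 3 ≤ Real.sqrt 3 / π * x ^ 2 := by
    have := mul_le_mul_of_nonneg_left htub hx0.le
    calc x * Real.tan x / 3 ≤ x * (3 * Real.sqrt 3 / π * x) / 3 := by linarith
      _ = Real.sqrt 3 / π * x ^ 2 := by field_simp
  have h2 := cot_bound_aux hx0 hx3
  set s : ℝ := x ^ 2 with hs
  have hs0 : 0 < s := by positivity
  have hsT : s ≤ 1.0966231 := by
    have : x ≤ 1.0471977 := by
      calc x ≤ π / 3 := hx3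
        _ ≤ 1.0471977 := by linarith
    nlinarith
  have h3s : (0:ℝ) < 3 + s := by linarith
  have hsq3π : Real.sqrt 3 / π < 0.5513292 := by
    rw [div_lt_iff₀ hpi]; nlinarith
  have hkey : Real.sqrt 3 / π * s + 3 / (3 + s) < 1.34 := by
    have k1 : Real.sqrt 3 / π * s ≤ 0.5513292 * s :=
      mul_le_mul_of_nonneg_right hsq3π.le hs0.le
    have k2 : 3 / (3 + s) < 1.34 - 0.5513292 * s := by
      rw [div_lt_iff₀ h3s]
      nlinarith [mul_nonneg hs0.le (sub_nonneg.2 hsT)]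
    linarith
  have hL : x * Real.tan x / 3 + x * Real.cot x < 1.34 := by
    linarith [h1, h2, hkey]
  have hπinv : (0:ℝ) < 1 / π := by positivity
  have step : (1 / π) * (x * Real.tan x / 3 + x * Real.cot x) < (1 / π) * 1.34 :=
    mul_lt_mul_of_pos_left hL hπinv
  have hfin : (1 / π) * 1.34 < c6 * Real.exp 1 := by
    unfold c6
    rw [show (1:ℝ) / π * 1.34 = 1.34 / π from by ring, div_mul_eq_mul_div,
      div_lt_div_iff₀ hpi (by positivity : (0:ℝ) < 18 * Real.sqrt 3)]
    have hprod : (2.7182818:ℝ) * 3.141592 < Real.exp 1 * π :=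
      mul_lt_mul'' he hπ1 (by norm_num) (by norm_num)
    have h41 : (1.34:ℝ) * (18 * Real.sqrt 3) < 41.78 := by linarith
    have h42 : (41.78:ℝ) < 5 * (Real.exp 1 * π) := by linarith
    linarith [h41, h42]
  linarith

end Aux

/-- For fixed `n ≥ 3`: `m ↦ ∂_m h₁(m,n)` is strictly convex with unique critical
point `m = c₆/(2c_n)`, at which it takes the negative value `−c₆ − c₆ ln(c₆/(2c_n))`;
consequently `m ↦ h₁(m,n)` has exactly two critical points, the larger of which is a
local minimum. -/
theorem stmt8 (n : ℝ) (hn : 3 ≤ n) :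
    (∀ m ∈ Set.Ioi (0 : ℝ), HasDerivAt (fun m => h1 m n) (g1 n m) m) ∧
    StrictConvexOn ℝ (Set.Ioi 0) (g1 n) ∧
    (∀ m ∈ Set.Ioi (0 : ℝ), HasDerivAt (g1 n) (2 * cFun n - c6 / m) m) ∧
    (∀ m ∈ Set.Ioi (0 : ℝ), (2 * cFun n - c6 / m = 0 ↔ m = c6 / (2 * cFun n))) ∧
    g1 n (c6 / (2 * cFun n)) = -c6 - c6 * Real.log (c6 / (2 * cFun n)) ∧
    g1 n (c6 / (2 * cFun n)) < 0 ∧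
    ∃ m₁ m₂ : ℝ, 0 < m₁ ∧ m₁ < m₂ ∧
      {m : ℝ | m ∈ Set.Ioi (0 : ℝ) ∧ g1 n m = 0} = {m₁, m₂} ∧
      IsLocalMin (fun m => h1 m n) m₂ := by
  have hc : 0 < cFun n := cFun_pos hn
  have hce : 2 * cFun n < c6 * Real.exp 1 := two_cFun_lt hn
  have hc6 : 0 < c6 := c6_pos
  set M : ℝ := c6 / (2 * cFun n) with hMdef
  have hM0 : 0 < M := by positivity
  -- Part 1 : derivative of h1
  have hder_h : ∀ m ∈ Set.Ioi (0 : ℝ), HasDerivAt (fun m => h1 m n) (g1 n m) m := by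
    intro m hm
    rw [mem_Ioi] at hm
    have hm0 : m ≠ 0 := ne_of_gt hm
    have hd : HasDerivAt
        (fun m : ℝ => cFun n * m ^ 2 - c6 * m - c6 * (m * Real.log m) - kappa * (n - 6))
        (cFun n * ((2:ℕ) * m ^ 1) - c6 * 1 - c6 * (1 * Real.log m + m * m⁻¹)) m :=
      ((((hasDerivAt_pow 2 m).const_mul (cFun n)).sub
        ((hasDerivAt_id m).const_mul c6)).sub
        (((hasDerivAt_id m).mul (Real.hasDerivAt_log hm0)).const_mul c6)).sub_const _
    have hfun : (fun m : ℝ => h1 m n) =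
        fun m : ℝ => cFun n * m ^ 2 - c6 * m - c6 * (m * Real.log m) - kappa * (n - 6) := by
      funext y; simp only [h1]; ring
    rw [hfun]
    convert hd using 1
    have : m * m⁻¹ = 1 := mul_inv_cancel₀ hm0
    simp only [g1, this]
    push_cast
    ring
  -- Part 3 : derivative of g1
  have hder_g : ∀ m ∈ Set.Ioi (0 : ℝ), HasDerivAt (g1 n) (2 * cFun n - c6 / m) m := by
    intro m hm
    rw [mem_Ioi] at hm
    have hm0 : m ≠ 0 := ne_of_gt hm
    have hd : HasDerivAt (fun m : ℝ => 2 * cFun n * m - 2 * c6 - c6 * Real.log m)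
        (2 * cFun n * 1 - c6 * m⁻¹) m :=
      (((hasDerivAt_id m).const_mul (2 * cFun n)).sub_const (2 * c6)).sub
        ((Real.hasDerivAt_log hm0).const_mul c6)
    have : HasDerivAt (g1 n) (2 * cFun n * 1 - c6 * m⁻¹) m := hd
    convert this using 1
    rw [mul_one, div_eq_mul_inv]
  -- Part 2 : strict convexity of g1
  have hconv : StrictConvexOn ℝ (Set.Ioi 0) (g1 n) := by
    refine ⟨convex_Ioi 0, ?_⟩
    intro x hx y hy hxy a b ha hb hab
    have hlog := strictConcaveOn_log_Ioi.2 hx hy hxy ha hb hab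
    simp only [smul_eq_mul] at hlog ⊢
    have hmul := mul_lt_mul_of_pos_left hlog hc6
    have hab6 : a * (2 * c6) + b * (2 * c6) = 2 * c6 := by
      rw [← add_mul, hab, one_mul]
    simp only [g1]
    nlinarith [hmul, hab6]
  -- Part 4 : critical point characterization
  have hiff : ∀ m ∈ Set.Ioi (0 : ℝ), (2 * cFun n - c6 / m = 0 ↔ m = c6 / (2 * cFun n)) := by
    intro m hm
    rw [mem_Ioi] at hm
    have hm0 : m ≠ 0 := ne_of_gt hm
    have hcne : (2 * cFun n) ≠ 0 := by positivity
    constructor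
    · intro h
      field_simp at h ⊢
      linarith
    · intro h
      rw [h]
      field_simp
      ring
  -- Part 5 : value at the critical point
  have heq : g1 n M = -c6 - c6 * Real.log M := by
    have hMc : 2 * cFun n * M = c6 := by
      rw [hMdef]; field_simp
    simp only [g1]
    linarith [hMc]
  -- Part 6 : negativity
  have hMe : Real.exp (-1) < M := by
    have h1e : 1 / Real.exp 1 < M := by
      rw [hMdef, div_lt_div_iff₀ (Real.exp_pos 1) (by positivity)]
      linarith
    rw [Real.exp_neg]
    rw [← one_div]
    exact h1e
  have hlogM : -1 < Real.log M := (Real.lt_log_iff_exp_lt hM0).2 hMe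
  have hneg : g1 n M < 0 := by
    rw [heq]
    nlinarith [mul_pos hc6 (by linarith : (0:ℝ) < 1 + Real.log M)]
  -- continuity of g1 on Ioi 0
  have hcontOn : ContinuousOn (g1 n) (Set.Ioi 0) := fun m hm =>
    (hder_g m hm).continuousAt.continuousWithinAt
  -- monotonicity pieces
  have hanti : StrictAntiOn (g1 n) (Ioc 0 M) := by
    apply strictAntiOn_of_deriv_neg (convex_Ioc 0 M)
      (hcontOn.mono (fun y hy => hy.1))
    rw [interior_Ioc]
    intro y hy
    rw [(hder_g y hy.1).deriv]
    have hy0 : 0 < y := hy.1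
    have h1 : y * (2 * cFun n) < c6 := (lt_div_iff₀ (by positivity)).1 hy.2
    have h2 : 2 * cFun n < c6 / y := by rw [lt_div_iff₀ hy0]; linarith
    linarith
  have hmono : StrictMonoOn (g1 n) (Ici M) := by
    apply strictMonoOn_of_deriv_pos (convex_Ici M)
      (hcontOn.mono (fun y hy => lt_of_lt_of_le hM0 hy))
    rw [interior_Ici]
    intro y hy
    rw [(hder_g y (lt_trans hM0 hy)).deriv]
    have hy0 : 0 < y := lt_trans hM0 hy
    have h1 : c6 < y * (2 * cFun n) := (div_lt_iff₀ (by positivity)).1 hy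
    have h2 : c6 / y < 2 * cFun n := by rw [div_lt_iff₀ hy0]; linarith
    linarith
  -- endpoints with positive values
  set a : ℝ := Real.exp (-2) with hadef
  have ha0 : 0 < a := Real.exp_pos _
  have haM : a < M := lt_trans (by rw [hadef]; exact Real.exp_lt_exp.2 (by norm_num)) hMe
  have hga : 0 < g1 n a := by
    have : g1 n a = 2 * cFun n * Real.exp (-2) := by
      simp only [g1, hadef, Real.log_exp]; ring
    rw [this]
    positivity
  set b : ℝ := (c6 / cFun n) ^ 2 + M + 1 with hbdef
  have hb0 : 0 < b := by positivity
  have hMb : M < b := by rw [hbdef]; nlinarith [sq_nonneg (c6 / cFun n)]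
  have hgb : 0 < g1 n b := by
    have hsb : 0 < Real.sqrt b := Real.sqrt_pos.2 hb0
    have hlb : Real.log b ≤ 2 * (Real.sqrt b - 1) := by
      have h1 : Real.log b = 2 * Real.log (Real.sqrt b) := by
        rw [Real.log_sqrt hb0.le]; ring
      have h2 : Real.log (Real.sqrt b) ≤ Real.sqrt b - 1 :=
        Real.log_le_sub_one_of_pos hsb
      linarith
    have hsq : (c6 / cFun n) ^ 2 < b := by rw [hbdef]; nlinarith
    have hsb2 : c6 / cFun n < Real.sqrt b := by
      calc c6 / cFun n = Real.sqrt ((c6 / cFun n) ^ 2) :=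
            (Real.sqrt_sq (by positivity)).symm
        _ < Real.sqrt b := Real.sqrt_lt_sqrt (by positivity) hsq
    have hsqb : Real.sqrt b ^ 2 = b := Real.sq_sqrt hb0.le
    have hcb : c6 < cFun n * Real.sqrt b := by
      rw [div_lt_iff₀ hc] at hsb2; linarith
    simp only [g1]
    nlinarith [mul_le_mul_of_nonneg_left hlb hc6.le,
      mul_pos hsb (sub_pos.2 hcb)]
  -- roots by the intermediate value theorem
  have hsub1 : Icc a M ⊆ Set.Ioi 0 := fun y hy => lt_of_lt_of_le ha0 hy.1
  have hsub2 : Icc M b ⊆ Set.Ioi 0 := fun y hy => lt_of_lt_of_le hM0 hy.1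
  obtain ⟨m₁, hm₁mem, hm₁eq⟩ :
      ∃ m₁ ∈ Ioo a M, g1 n m₁ = 0 := by
    have := intermediate_value_Ioo' haM.le (hcontOn.mono hsub1)
    have h0 : (0:ℝ) ∈ Ioo (g1 n M) (g1 n a) := ⟨hneg, hga⟩
    obtain ⟨m₁, hmem, hval⟩ := this h0
    exact ⟨m₁, hmem, hval⟩
  obtain ⟨m₂, hm₂mem, hm₂eq⟩ :
      ∃ m₂ ∈ Ioo M b, g1 n m₂ = 0 := by
    have := intermediate_value_Ioo hMb.le (hcontOn.mono hsub2)
    have h0 : (0:ℝ) ∈ Ioo (g1 n M) (g1 n b) := ⟨hneg, hgb⟩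
    obtain ⟨m₂, hmem, hval⟩ := this h0
    exact ⟨m₂, hmem, hval⟩
  have hm₁0 : 0 < m₁ := lt_trans ha0 hm₁mem.1
  have hm₁M : m₁ < M := hm₁mem.2
  have hMm₂ : M < m₂ := hm₂mem.1
  have hm₁₂ : m₁ < m₂ := lt_trans hm₁M hMm₂
  -- set of roots
  have hset : {m : ℝ | m ∈ Set.Ioi (0 : ℝ) ∧ g1 n m = 0} = {m₁, m₂} := by
    ext m
    simp only [mem_setOf_eq, mem_insert_iff, mem_singleton_iff, mem_Ioi]
    constructor
    · rintro ⟨hm0, hmz⟩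
      rcases le_or_gt m M with hle | hlt
      · left
        exact hanti.injOn ⟨hm0, hle⟩ ⟨hm₁0, hm₁M.le⟩ (by rw [hmz, hm₁eq])
      · right
        exact hmono.injOn (le_of_lt hlt) hMm₂.le (by rw [hmz, hm₂eq])
    · rintro (rfl | rfl)
      · exact ⟨hm₁0, hm₁eq⟩
      · exact ⟨lt_trans hM0 hMm₂, hm₂eq⟩
  -- local minimum at m₂
  have hm₂0 : 0 < m₂ := lt_trans hM0 hMm₂
  have hlocmin : IsLocalMin (fun m => h1 m n) m₂ := by
    apply isLocalMin_of_deriv_Ioo hMm₂ (lt_add_one m₂)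
      ((hder_h m₂ hm₂0).continuousAt)
    · intro y hy
      have hy0 : (0:ℝ) < y := lt_trans hM0 hy.1
      exact (hder_h y hy0).differentiableAt.differentiableWithinAt
    · intro y hy
      have hy0 : (0:ℝ) < y := lt_trans hM0 (lt_trans hMm₂ hy.1)
      exact (hder_h y hy0).differentiableAt.differentiableWithinAt
    · intro y hy
      have hy0 : (0:ℝ) < y := lt_trans hM0 hy.1
      rw [(hder_h y hy0).deriv]
      have := hmono hy.1.le hMm₂.le hy.2
      rw [hm₂eq] at this
      linarith
    · intro y hy
      have hy0 : (0:ℝ) < y := lt_trans hM0 (lt_trans hMm₂ hy.1)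
      rw [(hder_h y hy0).deriv]
      have := hmono hMm₂.le (le_of_lt (lt_trans hMm₂ hy.1)) hy.1
      rw [hm₂eq] at this
      linarith
  exact ⟨hder_h, hconv, hder_g, hiff, heq, hneg, m₁, m₂, hm₁0, hm₁₂, hset, hlocmin⟩
end

section
/- Let α ∈ (0,1) and define Θ_α(λ) = (1+λ)(1 + λ^α − (1+λ)^α)/λ^α for λ ∈ (0,1]. Then Θ_α(λ) > 0 for all λ ∈ (0,1], and the function Λ(λ) = (1−α)λ + λ^{1+α} − (1+α)(1+λ)^α λ + α(1+λ)^{1+α} − α, which satisfies Θ_α'(λ) = Λ(λ)/λ^{1+α}, vanishes at exactly one point λ ∈ (0,1). -/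
open Real Set

noncomputable def Theta (α l : ℝ) : ℝ :=
  (1 + l) * ((1 + l ^ α - (1 + l) ^ α) / l ^ α)

noncomputable def Lam (α l : ℝ) : ℝ :=
  (1 - α) * l + l ^ (1 + α) - (1 + α) * (1 + l) ^ α * l + α * (1 + l) ^ (1 + α) - α

noncomputable def Lam' (α l : ℝ) : ℝ :=
  (1 - α) + (1 + α) * l ^ α - (1 + α) * α * (1 + l) ^ (α - 1) * l - (1 + α) * (1 + l) ^ α
    + α * (1 + α) * (1 + l) ^ α

noncomputable def Lam'' (α l : ℝ) : ℝ :=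
  α * (1 + α) * (l ^ (α - 1) + (1 - α) * l * (1 + l) ^ (α - 2) - (2 - α) * (1 + l) ^ (α - 1))

-- basic derivative helpers
lemma hd_rpow (α l : ℝ) (hl : 0 < l) :
    HasDerivAt (fun x : ℝ => x ^ α) (α * l ^ (α - 1)) l :=
  Real.hasDerivAt_rpow_const (Or.inl hl.ne')

lemma hd_rpow1 (α l : ℝ) (hl : 0 < l) :
    HasDerivAt (fun x : ℝ => (1 + x) ^ α) (α * (1 + l) ^ (α - 1)) l := by
  have h := (Real.hasDerivAt_rpow_const (p := α) (x := 1 + l)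
      (Or.inl (by positivity))).comp l ((hasDerivAt_id l).const_add 1)
  simpa [Function.comp_def] using h

lemma hd_Theta (α l : ℝ) (hl : 0 < l) :
    HasDerivAt (fun l => Theta α l)
      (1 * ((1 + l ^ α - (1 + l) ^ α) / l ^ α) +
        (1 + l) * (((α * l ^ (α - 1) - α * (1 + l) ^ (α - 1)) * l ^ α -
          (1 + l ^ α - (1 + l) ^ α) * (α * l ^ (α - 1))) / (l ^ α) ^ 2)) l := by
  have hne : l ^ α ≠ 0 := (Real.rpow_pos_of_pos hl α).ne'
  have hg : HasDerivAt (fun x : ℝ => 1 + x ^ α - (1 + x) ^ α)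
      (α * l ^ (α - 1) - α * (1 + l) ^ (α - 1)) l :=
    ((hd_rpow α l hl).const_add 1).sub (hd_rpow1 α l hl)
  have hq := hg.div (hd_rpow α l hl) hne
  have h1 : HasDerivAt (fun x : ℝ => 1 + x) 1 l := (hasDerivAt_id l).const_add 1
  exact h1.mul hq

lemma hd_Theta' (α l : ℝ) (hl : 0 < l) :
    HasDerivAt (fun l => Theta α l) (Lam α l / l ^ (1 + α)) l := by
  have h := hd_Theta α l hl
  have hne : l ^ α ≠ 0 := (Real.rpow_pos_of_pos hl α).ne'
  have h1l : (0:ℝ) < 1 + l := by linarith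
  have e1 : l ^ (α - 1) = l ^ α / l := by
    rw [Real.rpow_sub hl, Real.rpow_one]
  have e2 : l ^ (1 + α) = l * l ^ α := by
    rw [Real.rpow_add hl, Real.rpow_one]
  have e3 : (1 + l) ^ (α - 1) = (1 + l) ^ α / (1 + l) := by
    rw [Real.rpow_sub h1l, Real.rpow_one]
  have e4 : (1 + l) ^ (1 + α) = (1 + l) * (1 + l) ^ α := by
    rw [Real.rpow_add h1l, Real.rpow_one]
  convert h using 1
  rw [Lam, e1, e2, e3, e4]
  field_simp
  ring

lemma hd_Lam (α l : ℝ) (hl : 0 < l) :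
    HasDerivAt (fun l => Lam α l) (Lam' α l) l := by
  have h1l : (0:ℝ) < 1 + l := by linarith
  have h1 : HasDerivAt (fun x : ℝ => (1 - α) * x) (1 - α) l := by
    simpa using (hasDerivAt_id l).const_mul (1 - α)
  have h2 : HasDerivAt (fun x : ℝ => x ^ (1 + α)) ((1 + α) * l ^ α) l := by
    have := hd_rpow (1 + α) l hl
    simpa using this
  have h3 : HasDerivAt (fun x : ℝ => (1 + α) * (1 + x) ^ α * x)
      ((1 + α) * (α * (1 + l) ^ (α - 1)) * l + (1 + α) * (1 + l) ^ α * 1) l :=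
    ((hd_rpow1 α l hl).const_mul (1 + α)).mul (hasDerivAt_id l)
  have h4 : HasDerivAt (fun x : ℝ => α * (1 + x) ^ (1 + α))
      (α * ((1 + α) * (1 + l) ^ α)) l := by
    have := (hd_rpow1 (1 + α) l hl).const_mul α
    simpa using this
  have h := (((h1.add h2).sub h3).add h4).sub_const α
  refine h.congr_deriv ?_
  rw [Lam']
  ring

lemma hd_Lam' (α l : ℝ) (hl : 0 < l) :
    HasDerivAt (fun l => Lam' α l) (Lam'' α l) l := by
  have h1l : (0:ℝ) < 1 + l := by linarith
  have h2 : HasDerivAt (fun x : ℝ => (1 + α) * x ^ α) ((1 + α) * (α * l ^ (α - 1))) l :=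
    (hd_rpow α l hl).const_mul (1 + α)
  have h3 : HasDerivAt (fun x : ℝ => (1 + α) * α * (1 + x) ^ (α - 1) * x)
      ((1 + α) * α * ((α - 1) * (1 + l) ^ (α - 1 - 1)) * l + (1 + α) * α * (1 + l) ^ (α - 1) * 1) l :=
    ((hd_rpow1 (α - 1) l hl).const_mul ((1 + α) * α)).mul (hasDerivAt_id l)
  have h4 : HasDerivAt (fun x : ℝ => (1 + α) * (1 + x) ^ α)
      ((1 + α) * (α * (1 + l) ^ (α - 1))) l := (hd_rpow1 α l hl).const_mul (1 + α)
  have h5 : HasDerivAt (fun x : ℝ => α * (1 + α) * (1 + x) ^ α)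
      (α * (1 + α) * (α * (1 + l) ^ (α - 1))) l := (hd_rpow1 α l hl).const_mul (α * (1 + α))
  have h := ((((hasDerivAt_const l (1 - α)).add h2).sub h3).sub h4).add h5
  refine h.congr_deriv ?_
  rw [Lam'']
  have : α - 1 - 1 = α - 2 := by ring
  rw [this]
  ring

lemma Lam''_pos {α : ℝ} (hα : α ∈ Set.Ioo (0:ℝ) 1) {l : ℝ} (hl : 0 < l) :
    0 < Lam'' α l := by
  obtain ⟨hα0, hα1⟩ := hα
  have h1l : (0:ℝ) < 1 + l := by linarith
  -- Bernoulli with s = 1/l, p = 2 - α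
  have h0l : (0:ℝ) < 1 / l := by positivity
  have hB : 1 + (2 - α) * (1 / l) < (1 + 1 / l) ^ (2 - α) :=
    one_add_mul_self_lt_rpow_one_add (by linarith) h0l.ne' (by linarith)
  have hrw : (1 + 1 / l) ^ (2 - α) = (1 + l) ^ (2 - α) * l ^ (α - 2) := by
    have e : (1 : ℝ) + 1 / l = (1 + l) / l := by field_simp; ring
    rw [e, Real.div_rpow h1l.le hl.le, div_eq_mul_inv,
      show α - 2 = -(2 - α) by ring, Real.rpow_neg hl.le]
  rw [hrw] at hB
  have key : l ^ (α - 1) > l * (1 + l) ^ (α - 2) + (2 - α) * (1 + l) ^ (α - 2) := by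
    have hpos : 0 < l * (1 + l) ^ (α - 2) := by positivity
    have h := mul_lt_mul_of_pos_left hB hpos
    have e1 : (1 + l) ^ (2 - α) * (1 + l) ^ (α - 2) = 1 := by
      rw [← Real.rpow_add h1l]; norm_num
    have e2 : l ^ (α - 2) * l = l ^ (α - 1) := by
      nth_rewrite 2 [← Real.rpow_one l]
      rw [← Real.rpow_add hl]; ring_nf
    calc l * (1 + l) ^ (α - 2) + (2 - α) * (1 + l) ^ (α - 2)
        = l * (1 + l) ^ (α - 2) * (1 + (2 - α) * (1 / l)) := by field_simp
      _ < l * (1 + l) ^ (α - 2) * ((1 + l) ^ (2 - α) * l ^ (α - 2)) := h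
      _ = l ^ (α - 1) := by
          rw [show l * (1 + l) ^ (α - 2) * ((1 + l) ^ (2 - α) * l ^ (α - 2))
              = ((1 + l) ^ (2 - α) * (1 + l) ^ (α - 2)) * (l ^ (α - 2) * l) by ring, e1, e2]
          ring
  have hP : 0 < l ^ (α - 1) + (1 - α) * l * (1 + l) ^ (α - 2) - (2 - α) * (1 + l) ^ (α - 1) := by
    have e3 : (1 + l) ^ (α - 1) = (1 + l) ^ (α - 2) * (1 + l) := by
      nth_rewrite 1 [show α - 1 = (α - 2) + 1 by ring]
      rw [Real.rpow_add h1l, Real.rpow_one]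
    rw [e3]; nlinarith [key]
  rw [Lam'']
  positivity

lemma theta_pos {α : ℝ} (hα : α ∈ Set.Ioo (0:ℝ) 1) {l : ℝ} (hl : 0 < l) :
    0 < Theta α l := by
  obtain ⟨hα0, hα1⟩ := hα
  have h1l : (1:ℝ) < 1 + l := by linarith
  have key : (1 + l) ^ α < 1 + l ^ α := by
    have e : (1 + l) ^ α = (1 + l) ^ (α - 1) + l * (1 + l) ^ (α - 1) := by
      rw [show α = (α - 1) + 1 by ring, Real.rpow_add (by linarith), Real.rpow_one]
      ring_nf
    have h1 : (1 + l) ^ (α - 1) < 1 :=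
      Real.rpow_lt_one_of_one_lt_of_neg h1l (by linarith)
    have h2 : l * (1 + l) ^ (α - 1) < l ^ α := by
      have h3 : (1 + l) ^ (α - 1) < l ^ (α - 1) :=
        Real.rpow_lt_rpow_of_neg hl (by linarith) (by linarith)
      calc l * (1 + l) ^ (α - 1) < l * l ^ (α - 1) := by
            exact mul_lt_mul_of_pos_left h3 hl
        _ = l ^ α := by
            nth_rewrite 1 [← Real.rpow_one l]
            rw [← Real.rpow_add hl]; ring_nf
    linarith [e, h1, h2]
  have hpow : 0 < l ^ α := Real.rpow_pos_of_pos hl α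
  have : 0 < 1 + l ^ α - (1 + l) ^ α := by linarith
  rw [Theta]
  positivity

lemma lam_cont (α : ℝ) (hα0 : 0 < α) : ContinuousOn (fun l => Lam α l) (Icc (0:ℝ) 1) := by
  intro x hx
  have h1 : ContinuousAt (fun l : ℝ => l ^ (1 + α)) x :=
    Real.continuousAt_rpow_const x (1 + α) (Or.inr (by linarith))
  have h2 : ContinuousAt (fun l : ℝ => (1 + l) ^ α) x := by
    have := (Real.continuousAt_rpow_const (1 + x) α
        (Or.inl (by simp only [mem_Icc] at hx; nlinarith [hx.1]))).comp
      (continuousAt_const.add continuousAt_id)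
    exact this
  have h3 : ContinuousAt (fun l : ℝ => (1 + l) ^ (1 + α)) x := by
    have := (Real.continuousAt_rpow_const (1 + x) (1 + α)
        (Or.inl (by simp only [mem_Icc] at hx; nlinarith [hx.1]))).comp
      (continuousAt_const.add continuousAt_id)
    exact this
  apply ContinuousWithinAt.mono _ (subset_univ _)
  refine ContinuousAt.continuousWithinAt ?_
  unfold Lam
  fun_prop

lemma lam_zero {α : ℝ} (hα0 : 0 < α) : Lam α 0 = 0 := by
  rw [Lam, Real.zero_rpow (by linarith)]
  norm_num [Real.one_rpow]

lemma lam_one_pos {α : ℝ} (hα : α ∈ Set.Ioo (0:ℝ) 1) : 0 < Lam α 1 := by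
  obtain ⟨hα0, hα1⟩ := hα
  have h2 : (2:ℝ) ^ α < 2 := by
    nth_rewrite 2 [show (2:ℝ) = 2 ^ (1:ℝ) by rw [Real.rpow_one]]
    exact Real.rpow_lt_rpow_of_exponent_lt one_lt_two hα1
  have e1 : (1:ℝ) ^ (1 + α) = 1 := Real.one_rpow _
  have e2 : ((1:ℝ) + 1) ^ (1 + α) = 2 * 2 ^ α := by
    norm_num
    rw [Real.rpow_add (by norm_num), Real.rpow_one]
  have e3 : ((1:ℝ) + 1) ^ α = 2 ^ α := by norm_num
  rw [Lam, e1, e2, e3]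
  nlinarith [h2, hα1]

lemma lam_neg {α : ℝ} (hα : α ∈ Set.Ioo (0:ℝ) 1) {l : ℝ} (hl : 0 < l)
    (hla : l ^ α < α * (1 - α)) : Lam α l < 0 := by
  obtain ⟨hα0, hα1⟩ := hα
  have h1l : (0:ℝ) < 1 + l := by linarith
  set b := (1 + l) ^ α with hb
  have hb1 : 1 ≤ b := by
    rw [hb]
    calc (1:ℝ) = (1 + l) ^ (0:ℝ) := (Real.rpow_zero _).symm
      _ ≤ (1 + l) ^ α := Real.rpow_le_rpow_of_exponent_le (by linarith) hα0.le
  have hb2 : b ≤ 1 + α * l :=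
    rpow_one_add_le_one_add_mul_self (by linarith) hα0.le hα1.le
  have e4 : (1 + l) ^ (1 + α) = (1 + l) * b := by
    rw [hb, Real.rpow_add h1l, Real.rpow_one]
  have e5 : l ^ (1 + α) = l * l ^ α := by
    rw [Real.rpow_add hl, Real.rpow_one]
  rw [Lam, e4, e5, ← hb]
  rcases le_or_gt l α with h | h
  · nlinarith [mul_nonneg (sub_nonneg.mpr hb2) (sub_nonneg.mpr h)]
  · nlinarith [mul_nonneg (sub_nonneg.mpr hb1) (sub_nonneg.mpr h.le)]

lemma lam_strictConvex {α : ℝ} (hα : α ∈ Set.Ioo (0:ℝ) 1) :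
    StrictConvexOn ℝ (Icc (0:ℝ) 1) (fun l => Lam α l) := by
  apply strictConvexOn_of_deriv2_pos (convex_Icc 0 1) (lam_cont α hα.1)
  intro x hx
  rw [interior_Icc] at hx
  have hx0 : 0 < x := hx.1
  have hev : deriv (fun l => Lam α l) =ᶠ[nhds x] (fun l => Lam' α l) := by
    filter_upwards [IsOpen.mem_nhds isOpen_Ioi (mem_Ioi.mpr hx0)] with y hy
    exact (hd_Lam α y (mem_Ioi.mp hy)).deriv
  have h2 : deriv^[2] (fun l => Lam α l) x = Lam'' α x := by
    show deriv (deriv (fun l => Lam α l)) x = Lam'' α x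
    rw [hev.deriv_eq]
    exact (hd_Lam' α x hx0).deriv
  rw [h2]
  exact Lam''_pos hα hx0

/-- For `α ∈ (0,1)`: `Θ_α > 0` on `(0,1]`, the derivative of `Θ_α` is `Λ(λ)/λ^{1+α}`,
and `Λ` vanishes at exactly one point of `(0,1)`. -/
theorem stmt12 (α : ℝ) (hα : α ∈ Set.Ioo (0 : ℝ) 1) :
    (∀ l ∈ Set.Ioc (0 : ℝ) 1, 0 < Theta α l) ∧
    (∀ l ∈ Set.Ioo (0 : ℝ) 1,
      HasDerivAt (fun l => Theta α l) (Lam α l / l ^ (1 + α)) l) ∧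
    (∃! l : ℝ, l ∈ Set.Ioo (0 : ℝ) 1 ∧ Lam α l = 0) := by
  obtain ⟨hα0, hα1⟩ := hα
  refine ⟨fun l hl => theta_pos ⟨hα0, hα1⟩ hl.1, fun l hl => hd_Theta' α l hl.1, ?_⟩
  -- uniqueness of zeros via strict convexity
  have huniq : ∀ x ∈ Set.Ioo (0:ℝ) 1, Lam α x = 0 → ∀ y ∈ Set.Ioo (0:ℝ) 1,
      Lam α y = 0 → x = y := by
    have key : ∀ x y : ℝ, x ∈ Set.Ioo (0:ℝ) 1 → y ∈ Set.Ioo (0:ℝ) 1 → Lam α x = 0 →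
        Lam α y = 0 → x < y → False := by
      intro x y hx hy hfx hfy hxy
      have hy0 : (0:ℝ) < y := hy.1
      have SC := lam_strictConvex ⟨hα0, hα1⟩
      have hmem0 : (0:ℝ) ∈ Icc (0:ℝ) 1 := by constructor <;> norm_num
      have hmemy : y ∈ Icc (0:ℝ) 1 := ⟨hy0.le, hy.2.le⟩
      have ha : (0:ℝ) < 1 - x / y := by
        rw [sub_pos]; exact (div_lt_one hy0).mpr hxy
      have hb : (0:ℝ) < x / y := div_pos hx.1 hy0
      have hab : (1 - x / y) + x / y = 1 := by ring
      have h := SC.2 hmem0 hmemy hy0.ne ha hb hab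
      simp only [smul_eq_mul, mul_zero, zero_add] at h
      rw [div_mul_cancel₀ _ hy0.ne'] at h
      rw [hfx, hfy, lam_zero hα0] at h
      simp at h
    intro x hx hfx y hy hfy
    rcases lt_trichotomy x y with h | h | h
    · exact absurd (key x y hx hy hfx hfy h) (by simp)
    · exact h
    · exact absurd (key y x hy hx hfy hfx h) (by simp)
  -- existence via IVT
  set c : ℝ := α * (1 - α) / 2 with hc
  have hc0 : 0 < c := by rw [hc]; nlinarith
  have hc1 : c < 1 := by rw [hc]; nlinarith
  set l₀ : ℝ := c ^ (1 / α) with hl₀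
  have hl₀0 : 0 < l₀ := Real.rpow_pos_of_pos hc0 _
  have hl₀1 : l₀ < 1 := Real.rpow_lt_one hc0.le hc1 (by positivity)
  have hl₀α : l₀ ^ α = c := by
    rw [hl₀, ← Real.rpow_mul hc0.le, one_div, inv_mul_cancel₀ hα0.ne', Real.rpow_one]
  have hneg : Lam α l₀ < 0 := by
    apply lam_neg ⟨hα0, hα1⟩ hl₀0
    rw [hl₀α, hc]
    nlinarith
  have hpos : 0 < Lam α 1 := lam_one_pos ⟨hα0, hα1⟩
  have hcont : ContinuousOn (fun l => Lam α l) (Icc l₀ 1) :=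
    (lam_cont α hα0).mono (Icc_subset_Icc hl₀0.le le_rfl)
  have hiv := intermediate_value_Ioo hl₀1.le hcont
  have h0mem : (0:ℝ) ∈ Ioo (Lam α l₀) (Lam α 1) := ⟨hneg, hpos⟩
  obtain ⟨z, hz, hfz⟩ := hiv h0mem
  have hzmem : z ∈ Set.Ioo (0:ℝ) 1 := ⟨lt_trans hl₀0 hz.1, hz.2⟩
  exact ⟨z, ⟨hzmem, hfz⟩, fun y hy => huniq y hy.1 hy.2 z hzmem hfz⟩
end

section
/- For α ∈ (0,1), the function φ(α) := 2^{1−α}(1 + α²) − (1 + α) is strictly positive. -/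
open Real Set

/-- For `α ∈ (0,1)`, `2^{1−α}(1 + α²) − (1 + α) > 0`. -/
theorem stmt14 : ∀ α ∈ Set.Ioo (0 : ℝ) 1,
    0 < (2 : ℝ) ^ (1 - α) * (1 + α ^ 2) - (1 + α) := by
  rintro α ⟨h0, h1⟩
  have he : (2 : ℝ) ^ (1 - α) = Real.exp (Real.log 2 * (1 - α)) := by
    rw [Real.rpow_def_of_pos (by norm_num)]
  have hb := Real.add_one_le_exp (Real.log 2 * (1 - α))
  have hl : (0.6931471803 : ℝ) < Real.log 2 := Real.log_two_gt_d9
  have hp : 0 < 1 + α ^ 2 := by positivity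
  rw [he]
  nlinarith [mul_pos h0 (sub_pos.2 h1), mul_pos (mul_pos h0 (sub_pos.2 h1)) h0,
    mul_le_mul_of_nonneg_right hb (le_of_lt hp), sq_nonneg α, sq_nonneg (1 - α)]
end

section
/- Let α ∈ (0,1) and define q(x) = 1 + α(x − 1) + (α − 1)(x − 1)² for x ≥ 0. Then x^α ≥ q(x) for all x ≥ 0. -/
open Real Set

/-- For `α ∈ (0,1)` and `x ≥ 0`,
`x^α ≥ 1 + α(x − 1) + (α − 1)(x − 1)²`. -/
theorem stmt19 (α : ℝ) (hα : α ∈ Set.Ioo (0 : ℝ) 1) (x : ℝ) (hx : 0 ≤ x) :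
    1 + α * (x - 1) + (α - 1) * (x - 1) ^ 2 ≤ x ^ α := by
  obtain ⟨hα0, hα1⟩ := hα
  rcases eq_or_lt_of_le hx with h0 | hxpos
  · rw [← h0, Real.zero_rpow (ne_of_gt hα0)]
    ring_nf
    nlinarith
  -- Bernoulli: x^(1-α) ≤ 1 + (1-α)(x-1)
  have hb : x ^ (1 - α) ≤ 1 + (1 - α) * (x - 1) := by
    have := rpow_one_add_le_one_add_mul_self (s := x - 1)
      (by linarith) (p := 1 - α) (by linarith) (by linarith)
    simpa using this
  have hxa : (0 : ℝ) < x ^ α := Real.rpow_pos_of_pos hxpos α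
  -- x = x^α * x^(1-α)
  have hsplit : x ^ α * x ^ (1 - α) = x := by
    rw [← Real.rpow_add hxpos]; simp
  have hD : (0 : ℝ) < 1 + (1 - α) * (x - 1) := by nlinarith
  -- x ≤ x^α * (1 + (1-α)(x-1))
  have h1 : x ≤ x ^ α * (1 + (1 - α) * (x - 1)) := by
    calc x = x ^ α * x ^ (1 - α) := hsplit.symm
    _ ≤ x ^ α * (1 + (1 - α) * (x - 1)) := by
        exact mul_le_mul_of_nonneg_left hb hxa.le
  -- algebraic identity: q(x) * D ≤ x
  have h2 : (1 + α * (x - 1) + (α - 1) * (x - 1) ^ 2) * (1 + (1 - α) * (x - 1)) ≤ x := by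
    nlinarith [mul_nonneg hx (sq_nonneg (x - 1)), sq_nonneg ((1 - α) * (x - 1))]
  nlinarith [mul_le_mul_of_nonneg_right (le_of_lt hxa) hD.le]
end
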